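/- Let C be a symmetric convex body in an infinite-dimensional real Hilbert space H. For every complete orthonormal system 𝐞 = {e_γ}_{γ∈Γ} of H and every positive integer k, one has R^k(𝐞, C) = C, where R^k(𝐞, C) is the closed convex hull of C ∩ ⋃_{S ∈ [Γ]_k} F(Γ∖S). -/

import Mathlib

open Set

/-- `E ⊆ H` is a complete orthonormal system: its elements are pairwise orthogonal unit
vectors and its span is dense in `H`. -/
def IsCompleteONS {H : Type*} [NormedAddCommGroup H] [InnerProductSpace ℝ H]
    (E : Set H) : Prop :=
  Orthonormal ℝ ((↑) : E → H) ∧ (Submodule.span ℝ E).topologicalClosure = ⊤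

/-- `R^k(E, C)`: the closed convex hull of `C ∩ ⋃_{S ∈ [E]_k} F(E ∖ S)`. -/
noncomputable def kCoCrossH {H : Type*} [NormedAddCommGroup H] [InnerProductSpace ℝ H]
    (E : Set H) (k : ℕ) (C : Set H) : Set H :=
  closure (convexHull ℝ (C ∩ ⋃ S ∈ {S : Set H | S ⊆ E ∧ S.Finite ∧ S.ncard = k},
    ((Submodule.span ℝ (E \ S)).topologicalClosure : Set H)))

/-- For a symmetric convex body `C` in an infinite-dimensional Hilbert space `H`, every
complete orthonormal system `E` and every positive integer `k`, `R^k(E, C) = C`. -/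
theorem stmt_14 {H : Type*} [NormedAddCommGroup H] [InnerProductSpace ℝ H] [CompleteSpace H]
    (hinf : ¬ FiniteDimensional ℝ H)
    (C : Set H) (hCcl : IsClosed C) (hCconv : Convex ℝ C)
    (hCbdd : Bornology.IsBounded C) (hCint : (interior C).Nonempty) (hCsym : C = -C)
    (E : Set H) (hE : IsCompleteONS E) (k : ℕ) (hk : 0 < k) :
    kCoCrossH E k C = C := by
  classical
  obtain ⟨hON, hdense⟩ := hE
  apply Set.Subset.antisymm
  · have h1 : kCoCrossH E k C ⊆ closure (convexHull ℝ C) :=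
      closure_mono (convexHull_mono Set.inter_subset_left)
    rwa [hCconv.convexHull_eq, hCcl.closure_eq] at h1
  · intro x hx
    -- 0 is an interior point of C
    obtain ⟨p, hp⟩ := hCint
    have hsub : Neg.neg ⁻¹' (interior C) ⊆ C := by
      intro z hz
      have h1 : -z ∈ C := interior_subset hz
      rw [hCsym]
      exact h1
    have hpneg : -p ∈ interior C := by
      apply interior_maximal hsub (isOpen_interior.preimage continuous_neg)
      show - -p ∈ interior C
      rw [neg_neg]; exact hp
    have h0 : (0 : H) ∈ interior C := by
      have h := hCconv.interior hp hpneg (by norm_num : (0:ℝ) ≤ 1/2)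
        (by norm_num : (0:ℝ) ≤ 1/2) (by norm_num)
      simpa using h
    obtain ⟨r, hr0, hball⟩ : ∃ r > 0, Metric.ball (0 : H) r ⊆ C := by
      obtain ⟨r, hr0, h⟩ := Metric.mem_nhds_iff.mp (mem_interior_iff_mem_nhds.mp h0)
      exact ⟨r, hr0, h⟩
    -- E is infinite
    have hEinf : E.Infinite := by
      by_contra hni
      rw [Set.not_infinite] at hni
      have hfin := hni
      haveI := FiniteDimensional.span_of_finite ℝ hfin
      have hcl : IsClosed ((Submodule.span ℝ E : Submodule ℝ H) : Set H) :=
        Submodule.closed_of_finiteDimensional _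
      rw [hcl.submodule_topologicalClosure_eq] at hdense
      exact hinf (Module.Finite.equiv (LinearEquiv.ofTop _ hdense))
    -- enough to land in the closure of the intersection itself
    have hmain : x ∈ closure (C ∩ ⋃ S ∈ {S : Set H | S ⊆ E ∧ S.Finite ∧ S.ncard = k},
        ((Submodule.span ℝ (E \ S)).topologicalClosure : Set H)) := by
      rw [Metric.mem_closure_iff]
      intro ε hε
      have hx1 : (0:ℝ) < ‖x‖ + 1 := by positivity
      set t : ℝ := min (1/2) (ε / (2 * (‖x‖ + 1))) with ht_def
      have ht0 : 0 < t := lt_min (by norm_num) (by positivity)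
      have ht1 : t < 1 := lt_of_le_of_lt (min_le_left _ _) (by norm_num)
      have hte : t ≤ ε / (2 * (‖x‖ + 1)) := min_le_right _ _
      have htx : t * (‖x‖ + 1) ≤ ε / 2 := by
        rw [le_div_iff₀ (by positivity)] at hte
        nlinarith
      set δ : ℝ := min (t * r) (ε / 2) with hδ_def
      have hδ0 : 0 < δ := lt_min (mul_pos ht0 hr0) (half_pos hε)
      have hδtr : δ ≤ t * r := min_le_left _ _
      have hδε : δ ≤ ε / 2 := min_le_right _ _
      set a : ℝ := δ / k with ha_def
      have ha0 : 0 < a := div_pos hδ0 (by exact_mod_cast hk)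
      -- pick k coordinates where x has small coefficients
      have hsum : Summable fun γ : E => ‖(inner ℝ (γ : H) x : ℝ)‖ ^ 2 :=
        hON.inner_products_summable x
      have hbadfin : {γ : E | a ^ 2 ≤ ‖(inner ℝ (γ : H) x : ℝ)‖ ^ 2}.Finite := by
        have h2 : ∀ᶠ γ : E in Filter.cofinite, ‖(inner ℝ (γ : H) x : ℝ)‖ ^ 2 < a ^ 2 :=
          hsum.tendsto_cofinite_zero.eventually (gt_mem_nhds (by positivity))
        have h3 := Filter.eventually_cofinite.mp h2
        refine h3.subset ?_
        intro γ hγ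
        exact not_lt.mpr hγ
      have hBfin : (Subtype.val '' {γ : E | a ^ 2 ≤ ‖(inner ℝ (γ : H) x : ℝ)‖ ^ 2}).Finite :=
        hbadfin.image _
      obtain ⟨S, hSsub, hSfin, hScard⟩ :=
        (hEinf.diff hBfin).exists_subset_ncard_eq k
      have hSE : S ⊆ E := hSsub.trans Set.diff_subset
      have hsmall : ∀ γ ∈ S, ‖(inner ℝ γ x : ℝ)‖ < a := by
        intro γ hγ
        have hγE : γ ∈ E := hSE hγ
        by_contra hcon
        push_neg at hcon
        exact (hSsub hγ).2 ⟨⟨γ, hγE⟩, pow_le_pow_left₀ ha0.le hcon 2, rfl⟩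
      set T : Finset H := hSfin.toFinset with hT_def
      have hTcard : T.card = k := by
        rw [← Set.ncard_eq_toFinset_card S hSfin] at *; exact hScard
      have hTmem : ∀ γ, γ ∈ T ↔ γ ∈ S := fun γ => hSfin.mem_toFinset
      -- the projection operator
      set P : H →L[ℝ] H := ∑ γ ∈ T, (innerSL ℝ γ).smulRight γ with hP_def
      have Papply : ∀ z : H, P z = ∑ γ ∈ T, (inner ℝ γ z : ℝ) • γ := by
        intro z
        simp [hP_def, ContinuousLinearMap.sum_apply]
      set Q : H →L[ℝ] H := ContinuousLinearMap.id ℝ H - P with hQ_def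
      have Qapply : ∀ z : H, Q z = z - P z := fun z => rfl
      -- Q maps E into the closed span of E \ S
      have key : ∀ e ∈ E, Q e ∈ (Submodule.span ℝ (E \ S)).topologicalClosure := by
        intro e he
        have hinner : ∀ γ ∈ T, (inner ℝ γ e : ℝ) = if γ = e then 1 else 0 := by
          intro γ hγ
          have hγE : γ ∈ E := hSE ((hTmem γ).mp hγ)
          have h := orthonormal_iff_ite.mp hON ⟨γ, hγE⟩ ⟨e, he⟩
          simpa [Subtype.ext_iff] using h
        by_cases heS : e ∈ S
        · have hPe : P e = e := by
            rw [Papply]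
            rw [Finset.sum_congr rfl (fun γ hγ => by rw [hinner γ hγ])]
            have hstep : ∀ γ ∈ T, (if γ = e then (1:ℝ) else 0) • γ =
                if γ = e then e else 0 := by
              intro γ _
              by_cases hγe : γ = e
              · rw [if_pos hγe, if_pos hγe, one_smul, hγe]
              · rw [if_neg hγe, if_neg hγe, zero_smul]
            rw [Finset.sum_congr rfl hstep, Finset.sum_ite_eq' T e (fun _ => e)]
            simp [(hTmem e).mpr heS]
          rw [Qapply, hPe, sub_self]
          exact Submodule.zero_mem _
        · have hPe : P e = 0 := by
            rw [Papply]
            apply Finset.sum_eq_zero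
            intro γ hγ
            have : γ ≠ e := fun h => heS (h ▸ (hTmem γ).mp hγ)
            rw [hinner γ hγ, if_neg this, zero_smul]
          rw [Qapply, hPe, sub_zero]
          exact Submodule.le_topologicalClosure _ (Submodule.subset_span ⟨he, heS⟩)
      have hQx : Q x ∈ (Submodule.span ℝ (E \ S)).topologicalClosure := by
        have hspan : Submodule.span ℝ E ≤
            ((Submodule.span ℝ (E \ S)).topologicalClosure).comap (Q : H →ₗ[ℝ] H) :=
          Submodule.span_le.mpr (fun e he => key e he)
        have hclosed : IsClosed
            ((((Submodule.span ℝ (E \ S)).topologicalClosure).comap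
              (Q : H →ₗ[ℝ] H) : Submodule ℝ H) : Set H) :=
          (Submodule.isClosed_topologicalClosure _).preimage Q.continuous
        have h := Submodule.topologicalClosure_minimal _ hspan hclosed
        rw [hdense] at h
        exact Submodule.mem_comap.mp (h Submodule.mem_top)
      -- norm of the dropped part
      have hPxδ : ‖P x‖ ≤ δ := by
        rw [Papply]
        calc ‖∑ γ ∈ T, (inner ℝ γ x : ℝ) • γ‖
            ≤ ∑ γ ∈ T, ‖(inner ℝ γ x : ℝ) • γ‖ := norm_sum_le _ _
          _ ≤ ∑ γ ∈ T, a := by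
              apply Finset.sum_le_sum
              intro γ hγ
              have hγS : γ ∈ S := (hTmem γ).mp hγ
              have h1 : ‖(γ : H)‖ = 1 := hON.1 ⟨γ, hSE hγS⟩
              rw [norm_smul, h1, mul_one]
              exact (hsmall γ hγS).le
          _ = k * a := by rw [Finset.sum_const, hTcard, nsmul_eq_mul]
          _ = δ := by
              rw [ha_def]
              field_simp
      -- the approximating point
      set y : H := (1 - t) • x + (t - 1) • (P x) with hy_def
      set z : H := (t⁻¹ * (t - 1)) • (P x) with hz_def
      have htz : t • z = (t - 1) • (P x) := by
        rw [hz_def, smul_smul]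
        congr 1
        field_simp
      have hzC : z ∈ C := by
        apply hball
        rw [Metric.mem_ball, dist_zero_right, hz_def, norm_smul, Real.norm_eq_abs]
        have habs : |t⁻¹ * (t - 1)| = t⁻¹ * (1 - t) := by
          rw [abs_mul, abs_of_pos (inv_pos.mpr ht0), abs_of_neg (by linarith : t - 1 < 0)]
          ring
        rw [habs]
        calc t⁻¹ * (1 - t) * ‖P x‖ ≤ t⁻¹ * (1 - t) * δ := by
              apply mul_le_mul_of_nonneg_left hPxδ
              exact mul_nonneg (inv_nonneg.mpr ht0.le) (by linarith)
          _ ≤ t⁻¹ * (1 - t) * (t * r) := by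
              apply mul_le_mul_of_nonneg_left hδtr
              exact mul_nonneg (inv_nonneg.mpr ht0.le) (by linarith)
          _ = (1 - t) * r := by field_simp
          _ < r := by nlinarith
      have hyC : y ∈ C := by
        have h := hCconv hx hzC (by linarith : (0:ℝ) ≤ 1 - t) ht0.le (by ring)
        rw [htz] at h
        exact h
      have hyF : y ∈ ((Submodule.span ℝ (E \ S)).topologicalClosure : Set H) := by
        have heq : y = (1 - t) • (Q x) := by
          rw [hy_def, Qapply]
          module
        rw [heq]
        exact Submodule.smul_mem _ _ hQx
      refine ⟨y, ⟨hyC, ?_⟩, ?_⟩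
      · exact Set.mem_biUnion (show S ∈ {S : Set H | S ⊆ E ∧ S.Finite ∧ S.ncard = k}
          from ⟨hSE, hSfin, hScard⟩) hyF
      · have hxy : x - y = t • x + (1 - t) • (P x) := by
          rw [hy_def]; module
        rw [dist_eq_norm, hxy]
        calc ‖t • x + (1 - t) • (P x)‖ ≤ ‖t • x‖ + ‖(1 - t) • (P x)‖ := norm_add_le _ _
          _ = t * ‖x‖ + (1 - t) * ‖P x‖ := by
              rw [norm_smul, norm_smul, Real.norm_eq_abs, Real.norm_eq_abs,
                abs_of_pos ht0, abs_of_pos (by linarith : (0:ℝ) < 1 - t)]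
          _ ≤ t * ‖x‖ + δ := by nlinarith [norm_nonneg (P x)]
          _ < ε := by nlinarith
    exact closure_mono (subset_convexHull ℝ _) hmain
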